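/- Let γ be Euclidean gamma matrices with charge-conjugation matrix C, and let ξ : Fin 4 → R be a Grassmann-even Majorana spinor over a ℂ-algebra R. Then for all μ, ν, ρ: ξ̄(γ5γ_μγ_νγ_ρ)ξ = Σ_σ ε_{μνρσ}·ξ̄γ_σξ, where ε is the totally antisymmetric symbol with ε_{0123} = -1. -/

import Mathlib

open Matrix Complex BigOperators

noncomputable section

abbrev M4 : Type := Matrix (Fin 4) (Fin 4) ℂ

/-- Euclidean Clifford relation: γ_μγ_ν + γ_νγ_μ = 2δ_{μν}·1. -/
def CliffordRel (γ : Fin 4 → M4) : Prop :=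
  ∀ μ ν, γ μ * γ ν + γ ν * γ μ = if μ = ν then (2 : ℂ) • (1 : M4) else 0

/-- γ5 := -(γ_0 γ_1 γ_2 γ_3). -/
def gamma5 (γ : Fin 4 → M4) : M4 := -(γ 0 * γ 1 * γ 2 * γ 3)

/-- σ_{μν} := (γ_μγ_ν - γ_νγ_μ)/2 = [γ_μ, γ_ν]/2. -/
def sigmaMat (γ : Fin 4 → M4) (μ ν : Fin 4) : M4 :=
  (2⁻¹ : ℂ) • (γ μ * γ ν - γ ν * γ μ)

/-- Charge-conjugation matrix: invertible, Cᵀ = -C, C⁻¹γ_μC = -(γ_μ)ᵀ. -/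
def ChargeConj (γ : Fin 4 → M4) (C : M4) : Prop :=
  IsUnit C.det ∧ Cᵀ = -C ∧ ∀ μ, C⁻¹ * γ μ * C = -(γ μ)ᵀ

/-- Majorana conjugate row vector: ξ̄_β := -Σ_α ξ_α·(C⁻¹)_{αβ}. -/
def MajBar {R : Type*} [Ring R] [Algebra ℂ R] (C : M4) (ξ : Fin 4 → R) (β : Fin 4) : R :=
  -∑ α, (C⁻¹ α β) • ξ α

/-- Spinor bilinear: ξ̄Mχ := Σ_{β,γ'} ξ̄_β·M_{βγ'}·χ_{γ'} (complex entries act by scalar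
multiplication). -/
def bilin {R : Type*} [Ring R] [Algebra ℂ R] (C : M4) (M : M4) (ξ χ : Fin 4 → R) : R :=
  ∑ β, ∑ g, M β g • (MajBar C ξ β * χ g)

/-- Totally antisymmetric symbol with ε_{0123} = -1: minus the determinant of the
permutation-like matrix with rows e_μ, e_ν, e_ρ, e_σ. -/
def eps (μ ν ρ σ : Fin 4) : ℂ :=
  -Matrix.det (Matrix.of fun i j => if ![μ, ν, ρ, σ] i = j then (1 : ℂ) else 0)

set_option maxHeartbeats 10000000 in
lemma eps_cast' (μ ν ρ σ : Fin 4) :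
    eps μ ν ρ σ = ((-Matrix.det (Matrix.of fun i j => if ![μ,ν,ρ,σ] i = j then (1 : ℤ) else 0) : ℤ) : ℂ) := by
  unfold eps
  push_cast
  congr 1
  rw [show (Matrix.of fun i j => if ![μ,ν,ρ,σ] i = j then (1 : ℂ) else 0)
      = (Int.castRingHom ℂ).mapMatrix (Matrix.of fun i j => if ![μ,ν,ρ,σ] i = j then (1 : ℤ) else 0) from by
    ext i j; simp [Matrix.map_apply, apply_ite]]
  rw [← RingHom.map_det]
  simp
  exact RingHom.map_det (Int.castRingHom ℂ) _

set_option maxHeartbeats 10000000 in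
lemma eps_eval' (μ ν ρ σ : Fin 4) :
    eps μ ν ρ σ = -((((ν:ℕ):ℂ)-((μ:ℕ):ℂ))*(((ρ:ℕ):ℂ)-((μ:ℕ):ℂ))*(((σ:ℕ):ℂ)-((μ:ℕ):ℂ))
      *(((ρ:ℕ):ℂ)-((ν:ℕ):ℂ))*(((σ:ℕ):ℂ)-((ν:ℕ):ℂ))*(((σ:ℕ):ℂ)-((ρ:ℕ):ℂ))) / 12 := by
  have hZ : ∀ μ ν ρ σ : Fin 4,
    -Matrix.det (Matrix.of fun i j => if ![μ,ν,ρ,σ] i = j then (1 : ℤ) else 0) * 12 =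
      -((((ν:ℕ):ℤ)-((μ:ℕ):ℤ))*(((ρ:ℕ):ℤ)-((μ:ℕ):ℤ))*(((σ:ℕ):ℤ)-((μ:ℕ):ℤ))*(((ρ:ℕ):ℤ)-((ν:ℕ):ℤ))*(((σ:ℕ):ℤ)-((ν:ℕ):ℤ))*(((σ:ℕ):ℤ)-((ρ:ℕ):ℤ))) := by decide
  have h := hZ μ ν ρ σ
  have h2 := congrArg (fun z : ℤ => ((z : ℂ) / 12)) h
  push_cast at h2
  rw [eps_cast']
  push_cast
  rw [← h2]
  ring

set_option maxHeartbeats 10000000 in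
lemma core' (γ : Fin 4 → M4) (hcl : CliffordRel γ) (μ ν ρ : Fin 4) :
    gamma5 γ * γ μ * γ ν * γ ρ + γ ρ * γ ν * γ μ * gamma5 γ
      = ∑ s : Fin 4, (2 * eps μ ν ρ s) • γ s := by
  have hsq : ∀ i, γ i * γ i = 1 := by
    intro i
    have h := hcl i i
    rw [if_pos rfl, ← two_smul ℂ (γ i * γ i)] at h
    have := congrArg (fun A => (2:ℂ)⁻¹ • A) h
    simpa [smul_smul] using this
  have hsq' : ∀ i x, γ i * (γ i * x) = x := by
    intro i x; rw [← mul_assoc, hsq, one_mul]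
  have hanti : ∀ i j, i ≠ j → γ j * γ i = -(γ i * γ j) := by
    intro i j hij
    have h := hcl j i
    rw [if_neg (by simpa [eq_comm] using hij)] at h
    linear_combination (norm := noncomm_ring) h
  have hanti' : ∀ i j, i ≠ j → ∀ x, γ j * (γ i * x) = -(γ i * (γ j * x)) := by
    intro i j hij x
    rw [← mul_assoc, hanti i j hij, neg_mul, mul_assoc]
  have h10 := hanti 0 1 (by decide); have h10' := hanti' 0 1 (by decide)
  have h20 := hanti 0 2 (by decide); have h20' := hanti' 0 2 (by decide)
  have h30 := hanti 0 3 (by decide); have h30' := hanti' 0 3 (by decide)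
  have h21 := hanti 1 2 (by decide); have h21' := hanti' 1 2 (by decide)
  have h31 := hanti 1 3 (by decide); have h31' := hanti' 1 3 (by decide)
  have h32 := hanti 2 3 (by decide); have h32' := hanti' 2 3 (by decide)
  have hfin : ∀ i : Fin 4, i = 0 ∨ i = 1 ∨ i = 2 ∨ i = 3 := by decide
  rcases hfin μ with rfl|rfl|rfl|rfl <;> rcases hfin ν with rfl|rfl|rfl|rfl <;>
    rcases hfin ρ with rfl|rfl|rfl|rfl <;>
  · simp only [gamma5, mul_assoc, neg_mul, mul_neg, neg_neg, one_mul, mul_one,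
      hsq, hsq', h10, h10', h20, h20', h30, h30', h21, h21', h31, h31', h32, h32',
      Fin.sum_univ_four, eps_eval', Fin.val_zero, Fin.val_one,
      show ((2:Fin 4)).val = 2 from rfl, show ((3:Fin 4)).val = 3 from rfl]
    norm_num
    try module

section bil
variable {R : Type*} [Ring R] [Algebra ℂ R]

lemma sum3_comm' {A : Type*} [AddCommMonoid A] (F : Fin 4 → Fin 4 → Fin 4 → A) :
    ∑ a, ∑ b, ∑ c, F a b c = ∑ c, ∑ a, ∑ b, F a b c := by
  have h1 : ∀ a : Fin 4, ∑ b : Fin 4, ∑ c : Fin 4, F a b c = ∑ c, ∑ b, F a b c :=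
    fun a => Finset.sum_comm
  simp_rw [h1]
  exact Finset.sum_comm

lemma sum3_comm'' {A : Type*} [AddCommMonoid A] (F : Fin 4 → Fin 4 → Fin 4 → A) :
    ∑ a, ∑ b, ∑ c, F a b c = ∑ c, ∑ b, ∑ a, F a b c := by
  rw [sum3_comm']
  exact Finset.sum_congr rfl fun c _ => Finset.sum_comm

lemma bilin_eq' (C M : M4) (ξ : Fin 4 → R) :
    bilin C M ξ ξ = -∑ α, ∑ g, (C⁻¹ * M) α g • (ξ α * ξ g) := by
  have expand : bilin C M ξ ξ = ∑ β, ∑ g, ∑ α, -((C⁻¹ α β * M β g) • (ξ α * ξ g)) := by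
    unfold bilin MajBar
    apply Finset.sum_congr rfl; intro β _
    apply Finset.sum_congr rfl; intro g _
    rw [neg_mul, smul_neg, Finset.sum_mul, Finset.smul_sum, ← Finset.sum_neg_distrib]
    apply Finset.sum_congr rfl; intro α _
    rw [smul_mul_assoc, smul_smul, mul_comm (M β g)]
  rw [expand, sum3_comm'' (fun β g α => -((C⁻¹ α β * M β g) • (ξ α * ξ g)))]
  rw [← Finset.sum_neg_distrib]
  apply Finset.sum_congr rfl; intro α _
  rw [← Finset.sum_neg_distrib]
  apply Finset.sum_congr rfl; intro g _
  rw [Matrix.mul_apply, Finset.sum_smul, ← Finset.sum_neg_distrib]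

lemma sum_sym' (N : M4) (ξ : Fin 4 → R) (heven : ∀ α β, ξ α * ξ β = ξ β * ξ α) :
    ∑ α, ∑ g, N α g • (ξ α * ξ g) = ∑ α, ∑ g, Nᵀ α g • (ξ α * ξ g) := by
  rw [Finset.sum_comm]
  apply Finset.sum_congr rfl; intro α _
  apply Finset.sum_congr rfl; intro g _
  rw [Matrix.transpose_apply, heven]

lemma sum_eq_of' (N N' : M4) (ξ : Fin 4 → R) (heven : ∀ α β, ξ α * ξ β = ξ β * ξ α)
    (h : N + Nᵀ = N' + N'ᵀ) :
    ∑ α, ∑ g, N α g • (ξ α * ξ g) = ∑ α, ∑ g, N' α g • (ξ α * ξ g) := by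
  have hS : ∀ P : M4, (2:ℂ) • (∑ α, ∑ g, P α g • (ξ α * ξ g))
      = ∑ α, ∑ g, (P + Pᵀ) α g • (ξ α * ξ g) := by
    intro P
    rw [two_smul]
    nth_rewrite 2 [sum_sym' P ξ heven]
    simp [Matrix.add_apply, add_smul, Finset.sum_add_distrib]
  have h2 : (2:ℂ) • (∑ α, ∑ g, N α g • (ξ α * ξ g))
      = (2:ℂ) • (∑ α, ∑ g, N' α g • (ξ α * ξ g)) := by
    rw [hS, hS, h]
  have h3 := congrArg (fun x : R => (2:ℂ)⁻¹ • x) h2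
  simpa [smul_smul] using h3

lemma bilin_sum_smul' (C : M4) (c : Fin 4 → ℂ) (A : Fin 4 → M4) (ξ χ : Fin 4 → R) :
    bilin C (∑ s, c s • A s) ξ χ = ∑ s, c s • bilin C (A s) ξ χ := by
  unfold bilin
  simp only [Matrix.sum_apply, Matrix.smul_apply, smul_eq_mul, Finset.sum_smul, smul_smul,
    Finset.smul_sum]
  rw [sum3_comm' (fun β g s => (c s * A s β g) • (MajBar C ξ β * χ g))]

end bil

set_option maxHeartbeats 4000000 in
theorem statement6 {R : Type*} [Ring R] [Algebra ℂ R]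
    (γ : Fin 4 → M4) (C : M4) (hcl : CliffordRel γ) (hC : ChargeConj γ C)
    (ξ : Fin 4 → R) (heven : ∀ α β, ξ α * ξ β = ξ β * ξ α) :
    ∀ μ ν ρ, bilin C (gamma5 γ * γ μ * γ ν * γ ρ) ξ ξ =
      ∑ s : Fin 4, eps μ ν ρ s • bilin C (γ s) ξ ξ := by
  obtain ⟨hdet, hT, hconj⟩ := hC
  have hCC : C⁻¹ * C = 1 := Matrix.nonsing_inv_mul C hdet
  have hCC' : C * C⁻¹ = 1 := Matrix.mul_nonsing_inv C hdet
  have hCs : ∀ X : M4, C * (C⁻¹ * X) = X := by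
    intro X; rw [← mul_assoc, hCC', one_mul]
  have hCs2 : ∀ X : M4, C⁻¹ * (C * X) = X := by
    intro X; rw [← mul_assoc, hCC, one_mul]
  have hCit : (C⁻¹)ᵀ = -C⁻¹ := by
    rw [Matrix.transpose_nonsing_inv, hT]
    exact Matrix.inv_eq_left_inv (by rw [neg_mul_neg, hCC])
  have hγT : ∀ i, (γ i)ᵀ = -(C⁻¹ * (γ i * C)) := by
    intro i
    have h := hconj i
    rw [mul_assoc] at h
    rw [h, neg_neg]
  -- reversal identity
  have hanti' : ∀ i j, i ≠ j → ∀ x : M4, γ j * (γ i * x) = -(γ i * (γ j * x)) := by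
    intro i j hij x
    have h := hcl j i
    rw [if_neg (by simpa [eq_comm] using hij)] at h
    have hji : γ j * γ i = -(γ i * γ j) := by
      linear_combination (norm := noncomm_ring) h
    rw [← mul_assoc, hji, neg_mul, mul_assoc]
  have hanti : ∀ i j, i ≠ j → γ j * γ i = -(γ i * γ j) := by
    intro i j hij
    have h := hcl j i
    rw [if_neg (by simpa [eq_comm] using hij)] at h
    linear_combination (norm := noncomm_ring) h
  have hrev : ∀ x : M4, γ 3 * (γ 2 * (γ 1 * (γ 0 * x))) = γ 0 * (γ 1 * (γ 2 * (γ 3 * x))) := by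
    intro x
    simp only [hanti' 0 1 (by decide), hanti' 0 2 (by decide), hanti' 0 3 (by decide),
      hanti' 1 2 (by decide), hanti' 1 3 (by decide), hanti' 2 3 (by decide),
      mul_neg, neg_mul, neg_neg]
  have hγ5T : (gamma5 γ)ᵀ = C⁻¹ * (gamma5 γ * C) := by
    unfold gamma5
    rw [Matrix.transpose_neg, Matrix.transpose_mul, Matrix.transpose_mul, Matrix.transpose_mul]
    simp only [hγT, mul_neg, neg_mul, neg_neg, mul_assoc, hCs, hCs2]
    rw [hrev C]
    try simp [mul_assoc]
  intro μ ν ρ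
  set M : M4 := gamma5 γ * γ μ * γ ν * γ ρ with hM
  set M' : M4 := ∑ s : Fin 4, eps μ ν ρ s • γ s with hM'
  have hMt : (C⁻¹ * M)ᵀ = C⁻¹ * (γ ρ * γ ν * γ μ * gamma5 γ) := by
    rw [hM, Matrix.transpose_mul, Matrix.transpose_mul, Matrix.transpose_mul,
      Matrix.transpose_mul, hCit, hγ5T]
    simp only [hγT, mul_neg, neg_mul, neg_neg, mul_assoc, hCs, hCs2, hCC', mul_one]
  have hsum1 : C⁻¹ * M + (C⁻¹ * M)ᵀ = ∑ s : Fin 4, (2 * eps μ ν ρ s) • (C⁻¹ * γ s) := by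
    rw [hMt, ← Matrix.mul_add, core' γ hcl μ ν ρ, Matrix.mul_sum]
    exact Finset.sum_congr rfl fun s _ => mul_smul_comm _ _ _
  have hγsT : ∀ s, (C⁻¹ * γ s)ᵀ = C⁻¹ * γ s := by
    intro s
    rw [Matrix.transpose_mul, hCit, hγT]
    simp only [neg_mul, mul_neg, neg_neg, mul_assoc, hCC', mul_one]
  have hsum2 : C⁻¹ * M' + (C⁻¹ * M')ᵀ = ∑ s : Fin 4, (2 * eps μ ν ρ s) • (C⁻¹ * γ s) := by
    have hCM' : C⁻¹ * M' = ∑ s : Fin 4, eps μ ν ρ s • (C⁻¹ * γ s) := by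
      rw [hM', Matrix.mul_sum]
      exact Finset.sum_congr rfl fun s _ => mul_smul_comm _ _ _
    rw [hCM', Matrix.transpose_sum, ← Finset.sum_add_distrib]
    refine Finset.sum_congr rfl fun s _ => ?_
    rw [Matrix.transpose_smul, hγsT, two_mul, add_smul]
  have hkey : C⁻¹ * M + (C⁻¹ * M)ᵀ = C⁻¹ * M' + (C⁻¹ * M')ᵀ := by rw [hsum1, hsum2]
  calc bilin C M ξ ξ = -∑ α, ∑ g, (C⁻¹ * M) α g • (ξ α * ξ g) := bilin_eq' C M ξ
    _ = -∑ α, ∑ g, (C⁻¹ * M') α g • (ξ α * ξ g) := by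
        rw [sum_eq_of' (C⁻¹ * M) (C⁻¹ * M') ξ heven hkey]
    _ = bilin C M' ξ ξ := (bilin_eq' C M' ξ).symm
    _ = ∑ s : Fin 4, eps μ ν ρ s • bilin C (γ s) ξ ξ := bilin_sum_smul' C _ γ ξ ξ
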